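/- arXiv:2507.08388 — 6 statements merged into one kernel-verified Lean document; each statement's English description precedes it below -/
import Mathlib

section
/- Let G be a group with the property K̄. Then for every subgroup H of G there exists a finitely generated subgroup N of H such that the commutator subgroup of N equals the commutator subgroup of H, i.e., ⁅N,N⁆ = ⁅H,H⁆. In particular, the commutator subgroup of G is contained in a finitely generated subgroup of G. -/
/-- A group `G` has property K̄ if for every subgroup `X` of `G` the set of
subgroups of the form `⁅X, H⁆`, with `H` ranging over subgroups of `G`, is finite. -/
def PropK (G : Type*) [Group G] : Prop :=
  ∀ X : Subgroup G, {S : Subgroup G | ∃ H : Subgroup G, S = ⁅X, H⁆}.Finite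

private lemma fg_bot' {G : Type*} [Group G] : (⊥ : Subgroup G).FG :=
  (Subgroup.fg_iff _).mpr ⟨∅, by simp, Set.finite_empty⟩

private lemma fg_sup' {G : Type*} [Group G] {A B : Subgroup G} (hA : A.FG) (hB : B.FG) :
    (A ⊔ B).FG := by
  obtain ⟨s, hs, hsf⟩ := (Subgroup.fg_iff _).mp hA
  obtain ⟨t, ht, htf⟩ := (Subgroup.fg_iff _).mp hB
  exact (Subgroup.fg_iff _).mpr ⟨s ∪ t, by rw [Subgroup.closure_union, hs, ht], hsf.union htf⟩

/-- Given K̄ and a subgroup `X`, the commutator `⁅X, H⁆` is achieved by a f.g.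
subgroup of `H` containing any given f.g. `X₀ ≤ H`. -/
private lemma key {G : Type*} [Group G] (hG : PropK G) (X H X₀ : Subgroup G)
    (hX₀ : X₀.FG) (hX₀H : X₀ ≤ H) :
    ∃ E : Subgroup G, E.FG ∧ E ≤ H ∧ X₀ ≤ E ∧ ⁅X, E⁆ = ⁅X, H⁆ := by
  set s : Set (Subgroup G) :=
    {S | ∃ E : Subgroup G, E.FG ∧ E ≤ H ∧ X₀ ≤ E ∧ S = ⁅X, E⁆} with hs
  have hfin : s.Finite := (hG X).subset (by rintro S ⟨E, -, -, -, rfl⟩; exact ⟨E, rfl⟩)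
  have hne : s.Nonempty := ⟨⁅X, X₀⁆, X₀, hX₀, hX₀H, le_rfl, rfl⟩
  obtain ⟨S, ⟨E, hEfg, hEH, hX₀E, rfl⟩, hmax⟩ :=
    Set.Finite.exists_maximalFor id s hfin hne
  refine ⟨E, hEfg, hEH, hX₀E, le_antisymm (Subgroup.commutator_mono le_rfl hEH) ?_⟩
  rw [Subgroup.commutator_le]
  intro x hx y hy
  have hE' : ⁅X, E ⊔ Subgroup.closure {y}⁆ ∈ s :=
    ⟨E ⊔ Subgroup.closure {y}, fg_sup' hEfg ((Subgroup.fg_iff _).mpr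
      ⟨{y}, rfl, Set.finite_singleton y⟩),
      sup_le hEH (by rwa [Subgroup.closure_le, Set.singleton_subset_iff]),
      le_trans hX₀E le_sup_left, rfl⟩
  have heq : ⁅X, E⁆ = ⁅X, E ⊔ Subgroup.closure {y}⁆ :=
    le_antisymm (Subgroup.commutator_mono le_rfl le_sup_left)
      (hmax hE' (Subgroup.commutator_mono le_rfl le_sup_left))
  rw [heq]
  exact Subgroup.commutator_mem_commutator hx
    (Subgroup.mem_sup_right (Subgroup.subset_closure (Set.mem_singleton y)))

theorem stmt_3 (G : Type*) [Group G] (hG : PropK G) :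
    (∀ H : Subgroup G, ∃ N : Subgroup G, N ≤ H ∧ N.FG ∧ ⁅N, N⁆ = ⁅H, H⁆) ∧
      ∃ F : Subgroup G, F.FG ∧ commutator G ≤ F := by
  have main : ∀ H : Subgroup G, ∃ N : Subgroup G, N ≤ H ∧ N.FG ∧ ⁅N, N⁆ = ⁅H, H⁆ := by
    intro H
    -- Step 1: a f.g. F₀ ≤ H with ⁅H, F₀⁆ = ⁅H, H⁆
    obtain ⟨F₀, hF₀fg, hF₀H, -, hF₀⟩ := key hG H H ⊥ fg_bot' bot_le
    -- Step 2: a f.g. E₀ with F₀ ≤ E₀ ≤ H and ⁅F₀, E₀⁆ = ⁅F₀, H⁆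
    obtain ⟨E₀, hE₀fg, hE₀H, hF₀E₀, hE₀⟩ := key hG F₀ H F₀ hF₀fg hF₀H
    refine ⟨E₀, hE₀H, hE₀fg, le_antisymm (Subgroup.commutator_mono hE₀H hE₀H) ?_⟩
    calc ⁅H, H⁆ = ⁅H, F₀⁆ := hF₀.symm
      _ = ⁅F₀, H⁆ := Subgroup.commutator_comm _ _
      _ = ⁅F₀, E₀⁆ := hE₀.symm
      _ ≤ ⁅E₀, E₀⁆ := Subgroup.commutator_mono hF₀E₀ le_rfl
  refine ⟨main, ?_⟩
  obtain ⟨N, -, hNfg, hN⟩ := main ⊤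
  refine ⟨N, hNfg, ?_⟩
  rw [commutator_def, ← hN, Subgroup.commutator_le]
  intro a ha b hb
  rw [commutatorElement_def]
  exact mul_mem (mul_mem (mul_mem ha hb) (inv_mem ha)) (inv_mem hb)
end

section
/- Let G be a torsion-free group with the property K̄∞. Then for every subgroup H of G there exists a finitely generated subgroup N of H such that the commutator subgroup of N equals the commutator subgroup of H, i.e., ⁅N,N⁆ = ⁅H,H⁆. -/
/-- A group `G` has property K̄∞ if for every subgroup `X` of `G` the set of
subgroups of the form `⁅X, H⁆`, with `H` ranging over infinite subgroups of `G`,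
is finite. -/
def PropKInf (G : Type*) [Group G] : Prop :=
  ∀ X : Subgroup G, {S : Subgroup G | ∃ H : Subgroup G, Infinite H ∧ S = ⁅X, H⁆}.Finite

/-- The old Mathlib definition: a monoid is torsion-free if no non-identity element
has finite order. -/
def Monoid.IsTorsionFree (G : Type*) [Monoid G] : Prop :=
  ∀ g : G, g ≠ 1 → ¬IsOfFinOrder g

private lemma infinite_of_mem {G : Type*} [Group G] {F : Subgroup G} {h₀ : G}
    (h0F : h₀ ∈ F) (h0ord : ¬IsOfFinOrder h₀) : Infinite F := by
  exact Set.infinite_coe_iff.mpr (Set.Infinite.mono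
    (SetLike.coe_subset_coe.mpr (Subgroup.zpowers_le.mpr h0F))
    (infinite_zpowers.mpr h0ord))

private lemma key_s4 {G : Type*} [Group G] (hG : PropKInf G) (X H : Subgroup G) {h₀ : G}
    (h0H : h₀ ∈ H) (h0ord : ¬IsOfFinOrder h₀) :
    ∃ F : Subgroup G, F ≤ H ∧ F.FG ∧ h₀ ∈ F ∧ ⁅X, F⁆ = ⁅X, H⁆ := by
  set V : Set (Subgroup G) :=
    {S : Subgroup G | ∃ F : Subgroup G, F ≤ H ∧ F.FG ∧ h₀ ∈ F ∧ S = ⁅X, F⁆} with hV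
  have hVfin : V.Finite := by
    refine (hG X).subset ?_
    rintro S ⟨F, hFH, hFfg, h0F, rfl⟩
    exact ⟨F, infinite_of_mem h0F h0ord, rfl⟩
  have hVne : V.Nonempty := by
    refine ⟨⁅X, Subgroup.zpowers h₀⁆, Subgroup.zpowers h₀, ?_, ?_, ?_, rfl⟩
    · rwa [Subgroup.zpowers_le]
    · exact ⟨{h₀}, by simp [Subgroup.zpowers_eq_closure]⟩
    · exact Subgroup.mem_zpowers h₀
  obtain ⟨M, hM, hmax⟩ := hVfin.exists_maximalFor id V hVne
  obtain ⟨F₀, hF₀H, hF₀fg, h0F₀, rfl⟩ := hM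
  refine ⟨F₀, hF₀H, hF₀fg, h0F₀,
    le_antisymm (Subgroup.commutator_mono le_rfl hF₀H) ?_⟩
  rw [Subgroup.commutator_le]
  intro x hx h hh
  have hmem : ⁅X, F₀ ⊔ Subgroup.zpowers h⁆ ∈ V := by
    refine ⟨F₀ ⊔ Subgroup.zpowers h, sup_le hF₀H (by rwa [Subgroup.zpowers_le]),
      fg_sup' hF₀fg ⟨{h}, by simp [Subgroup.zpowers_eq_closure]⟩,
      Subgroup.mem_sup_left h0F₀, rfl⟩
  have heq : ⁅X, F₀⁆ = ⁅X, F₀ ⊔ Subgroup.zpowers h⁆ :=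
    le_antisymm (Subgroup.commutator_mono le_rfl le_sup_left)
      (hmax hmem (Subgroup.commutator_mono le_rfl le_sup_left))
  rw [heq]
  exact Subgroup.commutator_mem_commutator hx
    (Subgroup.mem_sup_right (Subgroup.mem_zpowers h))

theorem stmt_4 (G : Type*) [Group G] (htf : Monoid.IsTorsionFree G)
    (hG : PropKInf G) (H : Subgroup G) :
    ∃ N : Subgroup G, N ≤ H ∧ N.FG ∧ ⁅N, N⁆ = ⁅H, H⁆ := by
  by_cases hb : ∀ h ∈ H, h = 1
  · refine ⟨⊥, bot_le, ⟨∅, by simp⟩, ?_⟩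
    rw [(Subgroup.eq_bot_iff_forall H).mpr hb]
  · push_neg at hb
    obtain ⟨h₀, h0H, h0ne⟩ := hb
    have h0ord : ¬IsOfFinOrder h₀ := htf h₀ h0ne
    obtain ⟨E₀, hE₀H, hE₀fg, h0E₀, hE₀⟩ := key_s4 hG H H h0H h0ord
    obtain ⟨F₀, hF₀H, hF₀fg, _, hF₀⟩ := key_s4 hG E₀ H h0H h0ord
    refine ⟨E₀ ⊔ F₀, sup_le hE₀H hF₀H, fg_sup' hE₀fg hF₀fg, le_antisymm
      (Subgroup.commutator_mono (sup_le hE₀H hF₀H) (sup_le hE₀H hF₀H)) ?_⟩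
    calc ⁅H, H⁆ = ⁅H, E₀⁆ := hE₀.symm
      _ = ⁅E₀, H⁆ := Subgroup.commutator_comm _ _
      _ = ⁅E₀, F₀⁆ := hF₀.symm
      _ ≤ ⁅E₀ ⊔ F₀, E₀ ⊔ F₀⁆ := Subgroup.commutator_mono le_sup_left le_sup_right
end

section
/- Let G be a periodic group with the property K̄. Then the commutator subgroup ⁅G,G⁆ of G is finitely generated. -/
section Aux

variable {G : Type*} [Group G]

open scoped commutatorElement

lemma aux_fg_sup {H K : Subgroup G} (hH : H.FG) (hK : K.FG) : (H ⊔ K).FG := by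
  obtain ⟨S, hS, hSfin⟩ := (Subgroup.fg_iff H).1 hH
  obtain ⟨T, hT, hTfin⟩ := (Subgroup.fg_iff K).1 hK
  exact (Subgroup.fg_iff _).2 ⟨S ∪ T, by rw [Subgroup.closure_union, hS, hT],
    hSfin.union hTfin⟩

lemma aux_fg_sSup {s : Set (Subgroup G)} (hs : s.Finite)
    (hfg : ∀ H ∈ s, Subgroup.FG H) : (sSup s).FG := by
  revert hfg
  refine Set.Finite.induction_on s hs (fun _ => ?_) ?_
  · simpa using (Subgroup.fg_iff (⊥ : Subgroup G)).2 ⟨∅, by simp, Set.finite_empty⟩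
  · intro a s _ _ ih hfg
    rw [sSup_insert]
    exact aux_fg_sup (hfg a (Set.mem_insert a s))
      (ih fun H hH => hfg H (Set.mem_insert_of_mem a hH))

lemma aux_fg_iSup {ι : Sort*} {f : ι → Subgroup G} (hfin : (Set.range f).Finite)
    (hfg : ∀ i, (f i).FG) : (⨆ i, f i).FG := by
  rw [iSup]
  exact aux_fg_sSup hfin (by rintro H ⟨i, rfl⟩; exact hfg i)

/-- The commutator of two finite subgroups is finitely generated. -/
lemma aux_commutator_fg {H K : Subgroup G} (hH : (H : Set G).Finite)
    (hK : (K : Set G).Finite) : (⁅H, K⁆ : Subgroup G).FG := by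
  refine (Subgroup.fg_iff _).2 ⟨{x | ∃ g₁ ∈ H, ∃ g₂ ∈ K, ⁅g₁, g₂⁆ = x},
    (Subgroup.commutator_def H K).symm, ?_⟩
  have : {x | ∃ g₁ ∈ H, ∃ g₂ ∈ K, ⁅g₁, g₂⁆ = x} =
      Set.image2 (fun a b => ⁅a, b⁆) (H : Set G) (K : Set G) := by
    ext x
    simp [Set.mem_image2, eq_comm]
  rw [this]
  exact hH.image2 _ hK

end Aux

theorem stmt_6 (G : Type*) [Group G] (hper : Monoid.IsTorsion G)
    (hG : PropK G) : (commutator G).FG := by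
  -- every cyclic subgroup is finite
  have hzfin : ∀ g : G, ((Subgroup.zpowers g : Subgroup G) : Set G).Finite :=
    fun g => (finite_zpowers).2 (hper g)
  -- Step 1: for each g, ⁅zpowers g, ⊤⁆ = ⨆ h, ⁅zpowers g, zpowers h⁆
  have step1 : ∀ g : G, (⁅Subgroup.zpowers g, (⊤ : Subgroup G)⁆ : Subgroup G)
      = ⨆ h : G, ⁅Subgroup.zpowers g, Subgroup.zpowers h⁆ := by
    intro g
    apply le_antisymm
    · rw [Subgroup.commutator_le]
      intro a ha b _
      exact le_iSup (fun h : G => (⁅Subgroup.zpowers g, Subgroup.zpowers h⁆ : Subgroup G)) b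
        (Subgroup.commutator_mem_commutator ha (Subgroup.mem_zpowers b))
    · exact iSup_le fun h => Subgroup.commutator_mono le_rfl le_top
  -- Step 2: each ⁅zpowers g, ⊤⁆ is finitely generated
  have step2 : ∀ g : G, (⁅Subgroup.zpowers g, (⊤ : Subgroup G)⁆ : Subgroup G).FG := by
    intro g
    rw [step1 g]
    apply aux_fg_iSup
    · exact (hG (Subgroup.zpowers g)).subset (by rintro S ⟨h, rfl⟩; exact ⟨_, rfl⟩)
    · intro h
      exact aux_commutator_fg (hzfin g) (hzfin h)
  -- Step 3: commutator G = ⨆ g, ⁅zpowers g, ⊤⁆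
  have step3 : commutator G = ⨆ g : G, (⁅Subgroup.zpowers g, (⊤ : Subgroup G)⁆ : Subgroup G) := by
    rw [commutator_def]
    apply le_antisymm
    · rw [Subgroup.commutator_le]
      intro a _ b hb
      exact le_iSup (fun g : G => (⁅Subgroup.zpowers g, (⊤ : Subgroup G)⁆ : Subgroup G)) a
        (Subgroup.commutator_mem_commutator (Subgroup.mem_zpowers a) hb)
    · exact iSup_le fun g => Subgroup.commutator_mono le_top le_rfl
  rw [step3]
  apply aux_fg_iSup
  · refine (hG ⊤).subset ?_
    rintro S ⟨g, rfl⟩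
    exact ⟨Subgroup.zpowers g, Subgroup.commutator_comm _ _⟩
  · exact step2
end

section
/- Let G be a residually finite group with the property K̄∞. Then the commutator subgroup ⁅G,G⁆ of G is finite. -/
open scoped commutatorElement

private lemma commEl_center_left {G : Type*} [Group G] (g h z : G)
    (hz : z ∈ Subgroup.center G) : ⁅g * z, h⁆ = ⁅g, h⁆ := by
  have hzh : z * h = h * z := ((Subgroup.mem_center_iff.mp hz) h).symm
  simp only [commutatorElement_def, mul_inv_rev]
  calc g * z * h * (z⁻¹ * g⁻¹) * h⁻¹ = g * (z * h) * z⁻¹ * g⁻¹ * h⁻¹ := by group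
    _ = g * (h * z) * z⁻¹ * g⁻¹ * h⁻¹ := by rw [hzh]
    _ = g * h * g⁻¹ * h⁻¹ := by group

private lemma commEl_center_right {G : Type*} [Group G] (g h z : G)
    (hz : z ∈ Subgroup.center G) : ⁅g, h * z⁆ = ⁅g, h⁆ := by
  have hzg : z * g⁻¹ = g⁻¹ * z := ((Subgroup.mem_center_iff.mp hz) g⁻¹).symm
  simp only [commutatorElement_def, mul_inv_rev]
  calc g * (h * z) * g⁻¹ * (z⁻¹ * h⁻¹) = g * h * (z * g⁻¹) * z⁻¹ * h⁻¹ := by group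
    _ = g * h * (g⁻¹ * z) * z⁻¹ * h⁻¹ := by rw [hzg]
    _ = g * h * g⁻¹ * h⁻¹ := by group

/-- Schur's theorem, from a finite-index center. -/
private lemma finite_commutator_of_center {G : Type*} [Group G]
    [(Subgroup.center G).FiniteIndex] : Finite (commutator G) := by
  haveI : Finite (commutatorSet G) := by
    set Z := Subgroup.center G
    have : commutatorSet G ⊆
        Set.range (fun p : (G ⧸ Z) × (G ⧸ Z) => ⁅p.1.out, p.2.out⁆) := by
      rintro x ⟨g, h, rfl⟩
      refine ⟨(↑g, ↑h), ?_⟩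
      have hg : (g : G ⧸ Z).out = g * (g⁻¹ * (g : G ⧸ Z).out) := by group
      have hh : (h : G ⧸ Z).out = h * (h⁻¹ * (h : G ⧸ Z).out) := by group
      have hg' : g⁻¹ * (g : G ⧸ Z).out ∈ Z := by
        rw [← QuotientGroup.eq]
        exact (QuotientGroup.out_eq' (g : G ⧸ Z)).symm
      have hh' : h⁻¹ * (h : G ⧸ Z).out ∈ Z := by
        rw [← QuotientGroup.eq]
        exact (QuotientGroup.out_eq' (h : G ⧸ Z)).symm
      show ⁅(g : G ⧸ Z).out, (h : G ⧸ Z).out⁆ = ⁅g, h⁆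
      rw [hg, hh, commEl_center_left _ _ _ hg', commEl_center_right _ _ _ hh']
    exact (Set.Finite.subset (Set.finite_range _) this).to_subtype
  infer_instance

theorem stmt_8 (G : Type*) [Group G]
    (hrf : ∀ g : G, (∀ N : Subgroup G, N.Normal → N.FiniteIndex → g ∈ N) → g = 1)
    (hG : PropKInf G) : Finite (commutator G) := by
  cases finite_or_infinite G with
  | inl h => infer_instance
  | inr h =>
    -- every finite-index subgroup is infinite
    have hinf : ∀ N : Subgroup G, N.FiniteIndex → Infinite N := by
      intro N hN
      by_contra hfin
      rw [not_infinite_iff_finite] at hfin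
      haveI := hfin
      haveI : N.FiniteIndex := hN
      haveI : Finite (G ⧸ N) := N.finite_quotient_of_finiteIndex
      haveI : Finite G := Finite.of_equiv ((G ⧸ N) × N) Subgroup.groupEquivQuotientProdSubgroup.symm
      exact not_finite G
    -- the set of commutators with finite-index normal subgroups is finite
    set V : Set (Subgroup G) :=
      {S | ∃ N : Subgroup G, N.Normal ∧ N.FiniteIndex ∧ S = ⁅(⊤ : Subgroup G), N⁆} with hV
    have hVfin : V.Finite := by
      refine (hG ⊤).subset ?_
      rintro S ⟨N, _, hNfi, rfl⟩
      exact ⟨N, hinf N hNfi, rfl⟩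
    have hVne : V.Nonempty := ⟨⁅(⊤ : Subgroup G), (⊤ : Subgroup G)⁆, ⊤,
      inferInstance, inferInstance, rfl⟩
    obtain ⟨M, hM, hMmin'⟩ := hVfin.exists_minimal hVne
    have hMmin : ∀ a' ∈ V, id a' ≤ id M → id M = id a' := fun a' ha' h => le_antisymm (hMmin' ha' h) h
    obtain ⟨N₁, hN₁n, hN₁fi, hMN₁⟩ := hM
    -- M is contained in every finite-index normal subgroup
    have hMle : ∀ N : Subgroup G, N.Normal → N.FiniteIndex → M ≤ N := by
      intro N hNn hNfi
      haveI := hNn; haveI := hNfi; haveI := hN₁n; haveI := hN₁fi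
      have hmem : ⁅(⊤ : Subgroup G), N ⊓ N₁⁆ ∈ V :=
        ⟨N ⊓ N₁, inferInstance, inferInstance, rfl⟩
      have hle : ⁅(⊤ : Subgroup G), N ⊓ N₁⁆ ≤ M := by
        rw [hMN₁]; exact Subgroup.commutator_mono le_rfl inf_le_right
      have heq : M = ⁅(⊤ : Subgroup G), N ⊓ N₁⁆ := hMmin _ hmem hle
      calc M = ⁅(⊤ : Subgroup G), N ⊓ N₁⁆ := heq
        _ ≤ N ⊓ N₁ := Subgroup.commutator_le_right _ _
        _ ≤ N := inf_le_left
    -- hence M is trivial by residual finiteness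
    have hMbot : M = ⊥ := by
      rw [eq_bot_iff]
      intro g hg
      rw [Subgroup.mem_bot]
      exact hrf g fun N hNn hNfi => hMle N hNn hNfi hg
    -- so N₁ is central
    have hN₁c : N₁ ≤ Subgroup.center G := by
      intro n hn
      rw [Subgroup.mem_center_iff]
      intro g
      have : ⁅g, n⁆ ∈ M := hMN₁ ▸ Subgroup.commutator_mem_commutator (Subgroup.mem_top g) hn
      rw [hMbot, Subgroup.mem_bot, commutatorElement_eq_one_iff_mul_comm] at this
      exact this
    haveI : (Subgroup.center G).FiniteIndex :=
      haveI := hN₁fi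
      Subgroup.finiteIndex_of_le hN₁c
    exact finite_commutator_of_center
end

section
/- Let G be a perfect group with the property K̄. Then G is finitely generated. -/
lemma propK_aux {G : Type*} [Group G] (hG : PropK G) (X : Subgroup G) :
    ∃ s : Set G, s.Finite ∧ ⁅X, Subgroup.closure s⁆ = ⁅X, (⊤ : Subgroup G)⁆ := by
  set T : Set (Subgroup G) :=
    {S : Subgroup G | ∃ s : Set G, s.Finite ∧ S = ⁅X, Subgroup.closure s⁆} with hT
  have hTfin : T.Finite := by
    refine (hG X).subset ?_
    rintro S ⟨s, -, rfl⟩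
    exact ⟨Subgroup.closure s, rfl⟩
  have hTne : T.Nonempty := ⟨⁅X, Subgroup.closure (∅ : Set G)⁆, ∅, Set.finite_empty, rfl⟩
  obtain ⟨M, hM, hmax⟩ : ∃ M ∈ T, ∀ a' ∈ T, id M ≤ id a' → id M = id a' := by
    obtain ⟨M, hM, hmax⟩ := Set.Finite.exists_maximalFor id T hTfin hTne
    exact ⟨M, hM, fun a ha h => le_antisymm h (hmax ha h)⟩
  obtain ⟨s₀, hs₀fin, rfl⟩ := hM
  refine ⟨s₀, hs₀fin, le_antisymm (Subgroup.commutator_mono le_rfl le_top) ?_⟩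
  rw [Subgroup.commutator_le]
  intro x hx g _
  have hmem : ⁅X, Subgroup.closure (s₀ ∪ {g})⁆ ∈ T :=
    ⟨s₀ ∪ {g}, hs₀fin.union (Set.finite_singleton g), rfl⟩
  have hle : ⁅X, Subgroup.closure s₀⁆ ≤ ⁅X, Subgroup.closure (s₀ ∪ {g})⁆ :=
    Subgroup.commutator_mono le_rfl (Subgroup.closure_mono Set.subset_union_left)
  have heq := hmax _ hmem hle
  simp only [id] at heq
  rw [heq]
  exact Subgroup.commutator_mem_commutator hx
    (Subgroup.subset_closure (Set.mem_union_right _ rfl))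

theorem stmt_9 (G : Type*) [Group G] (hperf : commutator G = ⊤)
    (hG : PropK G) : Group.FG G := by
  obtain ⟨s₀, hs₀, h₀⟩ := propK_aux hG ⊤
  have h₀' : ⁅(⊤ : Subgroup G), Subgroup.closure s₀⁆ = ⊤ := by
    rw [h₀, ← commutator_def, hperf]
  obtain ⟨s₁, hs₁, h₁⟩ := propK_aux hG (Subgroup.closure s₀)
  have h₁' : ⁅Subgroup.closure s₀, Subgroup.closure s₁⁆ = ⊤ := by
    rw [h₁, Subgroup.commutator_comm, h₀']
  have hle : (⊤ : Subgroup G) ≤ Subgroup.closure (s₀ ∪ s₁) := by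
    rw [← h₁', Subgroup.closure_union, Subgroup.commutator_le]
    intro g₁ hg₁ g₂ hg₂
    have a := Subgroup.mem_sup_left (T := Subgroup.closure s₁) hg₁
    have b := Subgroup.mem_sup_right (S := Subgroup.closure s₀) hg₂
    exact mul_mem (mul_mem (mul_mem a b) (inv_mem a)) (inv_mem b)
  rw [Group.fg_iff]
  exact ⟨s₀ ∪ s₁, le_antisymm le_top hle, hs₀.union hs₁⟩
end

section
/- Let G be a group with the property K̄∞. If the center Z(G) of G is infinite, then G has the property K̄. -/
theorem stmt_10 (G : Type*) [Group G] (hG : PropKInf G)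
    (hcen : Infinite (Subgroup.center G)) : PropK G := by
  intro X
  apply (hG X).subset
  rintro S ⟨H, rfl⟩
  refine ⟨H ⊔ Subgroup.center G, ?_, ?_⟩
  · have h : (Subgroup.center G : Set G) ⊆ (H ⊔ Subgroup.center G : Subgroup G) :=
      SetLike.coe_subset_coe.mpr le_sup_right
    have h1 : (Subgroup.center G : Set G).Infinite := Set.infinite_coe_iff.mp hcen
    exact Set.infinite_coe_iff.mpr (h1.mono h)
  · refine le_antisymm (Subgroup.commutator_mono le_rfl le_sup_left) ?_
    rw [Subgroup.commutator_le]
    intro x hx g hg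
    rw [← SetLike.mem_coe, sup_comm, Subgroup.normal_mul] at hg
    obtain ⟨z, hz, h, hh, rfl⟩ := hg
    have hcomm : ∀ a : G, z * a = a * z := fun a => (Subgroup.mem_center_iff.mp hz a).symm
    open scoped commutatorElement in
    have : ⁅x, z * h⁆ = ⁅x, h⁆ := by
      simp only [commutatorElement_def, mul_inv_rev]
      rw [← mul_assoc, ← mul_assoc, mul_assoc x z h, hcomm h, ← mul_assoc,
        mul_assoc (x * h) z x⁻¹, hcomm x⁻¹, ← mul_assoc, mul_assoc (x * h * x⁻¹) z h⁻¹,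
        hcomm h⁻¹]
      group
    rw [this]
    exact Subgroup.commutator_mem_commutator hx hh
end
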